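/- Let f, g, h be non-constant meromorphic functions on ℂ satisfying f^n + g^m + h^k = 1 with min{n, m, k} ≥ 6 and with f^n, g^m, h^k linearly independent over ℂ, let D = W(f^n, g^m, h^k) be their Wronskian, and let z₀ ∈ ℂ be a zero or pole of at least one of f, g, h, with p, q, t the orders of f, g, h at z₀. If max{p, q, t} > 0 and min{p, q, t} < 0, then A(z₀) ≤ 3·1[p>0] + 3·1[q>0] + 3·1[t>0], where 1[·] denotes the indicator of the stated condition. -/

import Mathlib

/-- The order of a meromorphic function at a point: the exponent of the leading term of
the Laurent expansion (negative at a pole, positive at a zero, `0` otherwise; by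
convention `0` if the function is not meromorphic at the point or vanishes identically
near it). -/
noncomputable def meroOrd (f : ℂ → ℂ) (z : ℂ) : ℤ :=
  open Classical in
  if h : MeromorphicAt f z then (meromorphicOrderAt f z).untopD 0 else 0

/-- The pole multiplicity `U(F, z₀) = max (−ord(F, z₀), 0)`. -/
noncomputable def poleMult (f : ℂ → ℂ) (z : ℂ) : ℕ := (-(meroOrd f z)).toNat

/-- The zero multiplicity `U(1/F, z₀) = max (ord(F, z₀), 0)`. -/
noncomputable def zeroMult (f : ℂ → ℂ) (z : ℂ) : ℕ := (meroOrd f z).toNat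

/-- The Wronskian `W(F₁, F₂, F₃)`: the determinant of the 3×3 matrix whose rows are
the functions, their first derivatives and their second derivatives. -/
noncomputable def wronskian3 (F₁ F₂ F₃ : ℂ → ℂ) (z : ℂ) : ℂ :=
  Matrix.det !![F₁ z, F₂ z, F₃ z;
                deriv F₁ z, deriv F₂ z, deriv F₃ z;
                deriv (deriv F₁) z, deriv (deriv F₂) z, deriv (deriv F₃) z]

/-- The quantity
`A(z₀) = 3(U(1/F₁) + U(1/F₂) + U(1/F₃)) + 3U(D) − 3U(1/D) − 2(U(F₁) + U(F₂) + U(F₃))`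
at `z₀`, where `D = W(F₁, F₂, F₃)`. -/
noncomputable def nevanA (F₁ F₂ F₃ : ℂ → ℂ) (z : ℂ) : ℤ :=
  3 * ((zeroMult F₁ z : ℤ) + (zeroMult F₂ z : ℤ) + (zeroMult F₃ z : ℤ))
    + 3 * (poleMult (wronskian3 F₁ F₂ F₃) z : ℤ)
    - 3 * (zeroMult (wronskian3 F₁ F₂ F₃) z : ℤ)
    - 2 * ((poleMult F₁ z : ℤ) + (poleMult F₂ z : ℤ) + (poleMult F₃ z : ℤ))


open Metric Filter Set

lemma csb_analyticAt_deriv {g : ℂ → ℂ} {z : ℂ} (hg : AnalyticAt ℂ g z) :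
    AnalyticAt ℂ (deriv g) z := by
  rcases Metric.eventually_nhds_iff_ball.mp hg.eventually_analyticAt with ⟨r, hr, hball⟩
  exact (AnalyticOnNhd.deriv (fun w hw => hball w hw)) z (Metric.mem_ball_self hr)

lemma csb_const_of_deriv_zero {φ : ℂ → ℂ} {c : ℂ} {ρ : ℝ}
    (h : ∀ z ∈ Metric.ball c ρ, HasDerivAt φ 0 z) :
    ∀ z ∈ Metric.ball c ρ, φ z = φ c := by
  intro z hz
  have hc : c ∈ Metric.ball c ρ := Metric.mem_ball_self (Metric.nonempty_ball.mp ⟨z, hz⟩)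
  have hb := Convex.norm_image_sub_le_of_norm_hasDerivWithin_le
    (f := φ) (f' := fun _ => (0:ℂ)) (C := 0) (s := Metric.ball c ρ)
    (fun x hx => (h x hx).hasDerivWithinAt) (fun x _ => by simp)
    (convex_ball c ρ) hc hz
  exact sub_eq_zero.mp (norm_le_zero_iff.mp (by simpa using hb))

lemma csb_countable_compl {S : Set ℂ} (hS : S ∈ Filter.codiscrete ℂ) : Sᶜ.Countable := by
  rcases mem_codiscrete'.mp hS with ⟨-, hd⟩
  have : Countable ↥(Sᶜ) := by
    haveI := hd.to_subtype
    rw [← TopologicalSpace.separableSpace_iff_countable]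
    infer_instance
  exact Set.countable_coe_iff.mp this

lemma csb_preconnected {S : Set ℂ} (h : Sᶜ.Countable) : IsPreconnected S := by
  have := (h.isConnected_compl_of_one_lt_rank
    (by rw [Complex.rank_real_complex]; norm_num)).isPreconnected
  rwa [compl_compl] at this

lemma csb_analytic_mem_codiscrete {f : ℂ → ℂ} (hf : MeromorphicOn f Set.univ) :
    {z | AnalyticAt ℂ f z} ∈ Filter.codiscrete ℂ :=
  hf.eventually_codiscreteWithin_analyticAt f

lemma csb_eqOn_zero {φ : ℂ → ℂ} {S : Set ℂ} (hS : AnalyticOnNhd ℂ φ S)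
    (hconn : IsPreconnected S) {w : ℂ} {ρ : ℝ} (hρ : 0 < ρ)
    (hball : Metric.ball w ρ ⊆ S) (h0 : ∀ z ∈ Metric.ball w ρ, φ z = 0) :
    Set.EqOn φ 0 S := by
  apply hS.eqOn_zero_of_preconnected_of_frequently_eq_zero hconn (hball (Metric.mem_ball_self hρ))
  apply Filter.Eventually.frequently
  apply eventually_nhdsWithin_of_eventually_nhds
  filter_upwards [Metric.ball_mem_nhds w hρ] with z hz using h0 z hz

/-- From an eventual equality on the punctured neighbourhood, extract a punctured ball. -/
lemma csb_punctured_ball {z₀ : ℂ} {P : ℂ → Prop} (h : ∀ᶠ z in nhdsWithin z₀ {z₀}ᶜ, P z) :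
    ∃ r > 0, ∀ z, z ∈ Metric.ball z₀ r → z ≠ z₀ → P z := by
  rcases Metric.mem_nhdsWithin_iff.mp h with ⟨r, hr, hsub⟩
  exact ⟨r, hr, fun z hz hne => hsub ⟨hz, hne⟩⟩

lemma csb_derivStd {z₀ : ℂ} {s : ℤ} {g F : ℂ → ℂ} (hg : AnalyticAt ℂ g z₀)
    (hF : ∀ᶠ z in nhdsWithin z₀ {z₀}ᶜ, F z = (z - z₀) ^ s * g z) :
    AnalyticAt ℂ (fun z => (s : ℂ) * g z + (z - z₀) * deriv g z) z₀ ∧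
      ∀ᶠ z in nhdsWithin z₀ {z₀}ᶜ, deriv F z
        = (z - z₀) ^ (s - 1) * ((s : ℂ) * g z + (z - z₀) * deriv g z) := by
  constructor
  · exact ((analyticAt_const.mul hg).add
      (((analyticAt_id.sub analyticAt_const)).mul (csb_analyticAt_deriv hg)))
  rcases csb_punctured_ball hF with ⟨r₁, hr₁, hball₁⟩
  rcases Metric.eventually_nhds_iff_ball.mp hg.eventually_analyticAt with ⟨r₂, hr₂, hball₂⟩
  have hmem : Metric.ball z₀ (min r₁ r₂) ∩ {z₀}ᶜ ∈ nhdsWithin z₀ {z₀}ᶜ := by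
    exact Filter.inter_mem (mem_nhdsWithin_of_mem_nhds (Metric.ball_mem_nhds _ (lt_min hr₁ hr₂))) self_mem_nhdsWithin
  filter_upwards [hmem] with z hz
  obtain ⟨hzb, hzne⟩ := hz
  have hzne' : z - z₀ ≠ 0 := sub_ne_zero.mpr hzne
  -- F agrees with φ on a neighbourhood of z
  have hopen : IsOpen (Metric.ball z₀ (min r₁ r₂) ∩ {z₀}ᶜ) :=
    Metric.isOpen_ball.inter (isOpen_compl_singleton)
  have hev : F =ᶠ[nhds z] fun w => (w - z₀) ^ s * g w := by
    filter_upwards [hopen.mem_nhds ⟨hzb, hzne⟩] with w hw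
    exact hball₁ w (Metric.ball_subset_ball (min_le_left _ _) hw.1) hw.2
  rw [hev.deriv_eq]
  have hgz : DifferentiableAt ℂ g z :=
    (hball₂ z (Metric.ball_subset_ball (min_le_right _ _) hzb)).differentiableAt
  have h1 : HasDerivAt (fun w : ℂ => (w - z₀) ^ s) ((s : ℂ) * (z - z₀) ^ (s - 1)) z := by
    have := (hasDerivAt_zpow s (z - z₀) (Or.inl hzne')).comp z
      ((hasDerivAt_id z).sub_const z₀)
    simp at this; exact this
  have h2 : HasDerivAt (fun w => (w - z₀) ^ s * g w)
      ((s : ℂ) * (z - z₀) ^ (s - 1) * g z + (z - z₀) ^ s * deriv g z) z :=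
    h1.mul hgz.hasDerivAt
  rw [h2.deriv]
  have : (z - z₀) ^ s = (z - z₀) ^ (s - 1) * (z - z₀) := by
    rw [← zpow_add_one₀ hzne', sub_add_cancel]
  rw [this]; ring

/-- order lower bound from a representation with possibly-vanishing analytic factor -/
lemma csb_orderGe {z₀ : ℂ} {s : ℤ} {g F : ℂ → ℂ} (hg : AnalyticAt ℂ g z₀)
    (hF : ∀ᶠ z in nhdsWithin z₀ {z₀}ᶜ, F z = (z - z₀) ^ s * g z)
    (hm : MeromorphicAt F z₀) : (s : WithTop ℤ) ≤ meromorphicOrderAt F z₀ := by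
  rcases eq_or_ne (analyticOrderAt g z₀) ⊤ with ho | ho
  · have : ∀ᶠ z in nhdsWithin z₀ {z₀}ᶜ, F z = 0 := by
      have hg0 : ∀ᶠ z in nhds z₀, g z = 0 := analyticOrderAt_eq_top.mp ho
      filter_upwards [hF, eventually_nhdsWithin_of_eventually_nhds hg0] with z h1 h2
      rw [h1, h2, mul_zero]
    rw [meromorphicOrderAt_eq_top_iff.mpr this]
    exact le_top
  · rcases WithTop.ne_top_iff_exists.mp ho with ⟨a, ha⟩
    rcases (hg.analyticOrderAt_eq_natCast).mp ha.symm with ⟨u, hu, hu0, huev⟩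
    have : meromorphicOrderAt F z₀ = (s + a : ℤ) := by
      rw [meromorphicOrderAt_eq_int_iff hm]
      refine ⟨u, hu, hu0, ?_⟩
      filter_upwards [hF, eventually_nhdsWithin_of_eventually_nhds huev,
        self_mem_nhdsWithin] with z h1 h2 (hz : z ≠ z₀)
      have hzne' : z - z₀ ≠ 0 := sub_ne_zero.mpr hz
      rw [h1, h2, zpow_add₀ hzne', zpow_natCast]; simp only [smul_eq_mul]; ring
    rw [this]
    exact_mod_cast WithTop.coe_le_coe.mpr (by omega)

lemma csb_analyticAt_deriv' {g : ℂ → ℂ} {z : ℂ} (hg : AnalyticAt ℂ g z) :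
    AnalyticAt ℂ (deriv g) z := by
  rcases Metric.eventually_nhds_iff_ball.mp hg.eventually_analyticAt with ⟨r, hr, hball⟩
  exact (AnalyticOnNhd.deriv (fun w hw => hball w hw)) z (Metric.mem_ball_self hr)
lemma csb_pow_rep {f : ℂ → ℂ} {z₀ : ℂ} {p : ℤ} (N : ℕ) (hfm : MeromorphicAt f z₀)
    (ho : meromorphicOrderAt f z₀ = (p : WithTop ℤ)) :
    ∃ G : ℂ → ℂ, AnalyticAt ℂ G z₀ ∧ G z₀ ≠ 0 ∧
      ∀ᶠ z in nhdsWithin z₀ {z₀}ᶜ, f z ^ N = (z - z₀) ^ ((N : ℤ) * p) * G z := by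
  rcases (meromorphicOrderAt_eq_int_iff hfm).mp ho with ⟨u, hu, hu0, huev⟩
  refine ⟨fun z => u z ^ N, hu.pow N, pow_ne_zero N hu0, ?_⟩
  filter_upwards [huev, self_mem_nhdsWithin] with z h1 (hz : z ≠ z₀)
  have hzne' : z - z₀ ≠ 0 := sub_ne_zero.mpr hz
  rw [h1, smul_eq_mul, mul_pow, mul_comm (N : ℤ) p, zpow_mul, zpow_natCast]

lemma csb_mero_pow {f : ℂ → ℂ} {z₀ : ℂ} (N : ℕ) (hfm : MeromorphicAt f z₀) :
    MeromorphicAt (fun z => f z ^ N) z₀ := hfm.pow N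

lemma csb_order_pow {f : ℂ → ℂ} {z₀ : ℂ} {p : ℤ} (N : ℕ) (hfm : MeromorphicAt f z₀)
    (ho : meromorphicOrderAt f z₀ = (p : WithTop ℤ)) :
    meromorphicOrderAt (fun z => f z ^ N) z₀ = ((N : ℤ) * p : ℤ) := by
  rcases csb_pow_rep N hfm ho with ⟨G, hG, hG0, hev⟩
  rw [meromorphicOrderAt_eq_int_iff (csb_mero_pow N hfm)]
  exact ⟨G, hG, hG0, by filter_upwards [hev] with z h using by rw [h, smul_eq_mul]⟩

lemma csb_order_ne_top {f : ℂ → ℂ} (hf : MeromorphicOn f Set.univ)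
    (hfc : ¬ ∃ c : ℂ, ∀ z : ℂ, AnalyticAt ℂ f z → f z = c) (z₀ : ℂ) :
    meromorphicOrderAt f z₀ ≠ ⊤ := by
  intro htop
  apply hfc
  have hev := meromorphicOrderAt_eq_top_iff.mp htop
  rcases csb_punctured_ball hev with ⟨r, hr, hball⟩
  set z₁ : ℂ := z₀ + (r / 2 : ℝ) with hz₁
  have hdist : dist z₁ z₀ = r / 2 := by
    simp [hz₁, dist_eq_norm, Complex.norm_real, abs_of_pos (half_pos hr), abs_of_pos hr]
  have hsub : Metric.ball z₁ (r / 2) ⊆ Metric.ball z₀ r ∩ {z₀}ᶜ := by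
    intro w hw
    have hw' : dist w z₁ < r / 2 := Metric.mem_ball.mp hw
    constructor
    · have := dist_triangle w z₁ z₀
      rw [hdist] at this
      exact Metric.mem_ball.mpr (by linarith)
    · intro hcon
      rw [Set.mem_singleton_iff] at hcon
      subst hcon
      rw [dist_comm, hdist] at hw'
      linarith
  have h0 : ∀ w ∈ Metric.ball z₁ (r / 2), f w = 0 := fun w hw =>
    hball w (hsub hw).1 (hsub hw).2
  -- the analytic set
  set S : Set ℂ := {z | AnalyticAt ℂ f z} with hS
  have hSmem : S ∈ Filter.codiscrete ℂ := csb_analytic_mem_codiscrete hf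
  have hconn : IsPreconnected S := csb_preconnected (csb_countable_compl hSmem)
  have hsan : AnalyticOnNhd ℂ f S := fun z hz => hz
  have hz₁S : z₁ ∈ S := by
    have : f =ᶠ[nhds z₁] (fun _ => 0) := by
      filter_upwards [Metric.ball_mem_nhds z₁ (half_pos hr)] with w hw using h0 w hw
    exact (analyticAt_congr this).mpr analyticAt_const
  have hballS : Metric.ball z₁ (r / 2) ⊆ S := by
    intro w hw
    have hev' : f =ᶠ[nhds w] fun _ => 0 := by
      filter_upwards [Metric.isOpen_ball.mem_nhds hw] with x hx using h0 x hx
    exact (analyticAt_congr hev').mpr analyticAt_const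
  have heq0 := csb_eqOn_zero hsan hconn (half_pos hr) hballS h0
  exact ⟨0, fun z hz => heq0 hz⟩


lemma csb_cyc (P Q R : ℂ → ℂ) (z : ℂ) : wronskian3 P Q R z = wronskian3 Q R P z := by
  simp [wronskian3, Matrix.det_fin_three]; ring

lemma csb_pairD {P Q R : ℂ → ℂ} {U : Set ℂ} (hU : IsOpen U)
    (hP : ∀ z ∈ U, AnalyticAt ℂ P z) (hQ : ∀ z ∈ U, AnalyticAt ℂ Q z)
    (hR : ∀ z ∈ U, AnalyticAt ℂ R z)
    (hsum : ∀ z ∈ U, P z + Q z + R z = 1) :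
    ∀ z ∈ U, wronskian3 P Q R z
      = deriv P z * deriv (deriv Q) z - deriv Q z * deriv (deriv P) z := by
  have hR' : Set.EqOn R (fun w => 1 - P w - Q w) U := fun w hw => by
    have := hsum w hw; linear_combination this
  have hdP : AnalyticOnNhd ℂ (deriv P) U := AnalyticOnNhd.deriv (fun w hw => hP w hw)
  have hdQ : AnalyticOnNhd ℂ (deriv Q) U := AnalyticOnNhd.deriv (fun w hw => hQ w hw)
  have d1 : ∀ w ∈ U, deriv R w = -deriv P w - deriv Q w := by
    intro w hw
    have hev : R =ᶠ[nhds w] fun x => 1 - P x - Q x := by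
      filter_upwards [hU.mem_nhds hw] with x hx using hR' hx
    rw [hev.deriv_eq]
    have h1 : HasDerivAt (fun x => 1 - P x - Q x) (0 - deriv P w - deriv Q w) w :=
      ((hasDerivAt_const w (1:ℂ)).sub (hP w hw).differentiableAt.hasDerivAt).sub
        (hQ w hw).differentiableAt.hasDerivAt
    rw [h1.deriv]; ring
  have d2 : ∀ w ∈ U, deriv (deriv R) w = -deriv (deriv P) w - deriv (deriv Q) w := by
    intro w hw
    have hev : deriv R =ᶠ[nhds w] fun x => -deriv P x - deriv Q x := by
      filter_upwards [hU.mem_nhds hw] with x hx using d1 x hx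
    rw [hev.deriv_eq]
    have h1 : HasDerivAt (fun x => -deriv P x - deriv Q x)
        (-deriv (deriv P) w - deriv (deriv Q) w) w :=
      ((hdP w hw).differentiableAt.hasDerivAt.neg).sub
        (hdQ w hw).differentiableAt.hasDerivAt
    rw [h1.deriv]
  intro z hz
  have e0 : R z = 1 - P z - Q z := hR' hz
  have e1 := d1 z hz
  have e2 := d2 z hz
  simp [wronskian3, Matrix.det_fin_three]
  rw [e0, e1, e2]; ring
lemma csb_combine (A : ℂ) (hA : A ≠ 0) (sP sQ : ℤ) (x y u v : ℂ) :
    A ^ (sP - 1) * x * (A ^ (sQ - 1 - 1) * v) - A ^ (sQ - 1) * y * (A ^ (sP - 1 - 1) * u)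
      = A ^ (sP + sQ - 3) * (x * v - y * u) := by
  have h1 : A ^ (sP + sQ - 3) = A ^ (sP - 1) * A ^ (sQ - 1 - 1) := by
    rw [show sP + sQ - 3 = (sP - 1) + (sQ - 1 - 1) by ring, zpow_add₀ hA]
  have h2 : A ^ (sP + sQ - 3) = A ^ (sQ - 1) * A ^ (sP - 1 - 1) := by
    rw [show sP + sQ - 3 = (sQ - 1) + (sP - 1 - 1) by ring, zpow_add₀ hA]
  linear_combination (-(x * v)) * h1 + (y * u) * h2

lemma csb_D_rep {z₀ : ℂ} {sP sQ : ℤ} {P Q R gP gQ : ℂ → ℂ}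
    (hgP : AnalyticAt ℂ gP z₀) (hgQ : AnalyticAt ℂ gQ z₀)
    (hPrep : ∀ᶠ z in nhdsWithin z₀ {z₀}ᶜ, P z = (z - z₀) ^ sP * gP z)
    (hQrep : ∀ᶠ z in nhdsWithin z₀ {z₀}ᶜ, Q z = (z - z₀) ^ sQ * gQ z)
    (hPan : ∀ᶠ z in nhdsWithin z₀ {z₀}ᶜ, AnalyticAt ℂ P z)
    (hQan : ∀ᶠ z in nhdsWithin z₀ {z₀}ᶜ, AnalyticAt ℂ Q z)
    (hRan : ∀ᶠ z in nhdsWithin z₀ {z₀}ᶜ, AnalyticAt ℂ R z)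
    (hsum : ∀ᶠ z in nhdsWithin z₀ {z₀}ᶜ, P z + Q z + R z = 1) :
    ∃ G : ℂ → ℂ, AnalyticAt ℂ G z₀ ∧
      ∀ᶠ z in nhdsWithin z₀ {z₀}ᶜ, wronskian3 P Q R z = (z - z₀) ^ (sP + sQ - 3) * G z := by
  obtain ⟨hgP1, hP1⟩ := csb_derivStd hgP hPrep
  obtain ⟨hgP2, hP2⟩ := csb_derivStd hgP1 hP1
  obtain ⟨hgQ1, hQ1⟩ := csb_derivStd hgQ hQrep
  obtain ⟨hgQ2, hQ2⟩ := csb_derivStd hgQ1 hQ1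
  refine ⟨fun z => (fun w => (sP : ℂ) * gP w + (w - z₀) * deriv gP w) z *
      (fun w => ((sQ - 1 : ℤ) : ℂ) * ((sQ : ℂ) * gQ w + (w - z₀) * deriv gQ w)
        + (w - z₀) * deriv (fun x => (sQ : ℂ) * gQ x + (x - z₀) * deriv gQ x) w) z
      - (fun w => (sQ : ℂ) * gQ w + (w - z₀) * deriv gQ w) z *
      (fun w => ((sP - 1 : ℤ) : ℂ) * ((sP : ℂ) * gP w + (w - z₀) * deriv gP w)
        + (w - z₀) * deriv (fun x => (sP : ℂ) * gP x + (x - z₀) * deriv gP x) w) z,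
    (hgP1.mul hgQ2).sub (hgQ1.mul hgP2), ?_⟩
  rcases csb_punctured_ball ((hPan.and (hQan.and (hRan.and hsum)))) with ⟨r, hr, hball⟩
  have hUopen : IsOpen (Metric.ball z₀ r ∩ {z₀}ᶜ) :=
    Metric.isOpen_ball.inter isOpen_compl_singleton
  have hpair := csb_pairD hUopen (fun z hz => (hball z hz.1 hz.2).1)
    (fun z hz => (hball z hz.1 hz.2).2.1) (fun z hz => (hball z hz.1 hz.2).2.2.1)
    (fun z hz => (hball z hz.1 hz.2).2.2.2)
  have hUmem : Metric.ball z₀ r ∩ {z₀}ᶜ ∈ nhdsWithin z₀ {z₀}ᶜ :=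
    Filter.inter_mem (mem_nhdsWithin_of_mem_nhds (Metric.ball_mem_nhds _ hr))
      self_mem_nhdsWithin
  filter_upwards [hP1, hP2, hQ1, hQ2, hUmem, self_mem_nhdsWithin]
    with z e1P e2P e1Q e2Q hzU (hz : z ≠ z₀)
  have hzne : z - z₀ ≠ 0 := sub_ne_zero.mpr hz
  rw [hpair z hzU, e1P, e2P, e1Q, e2Q, csb_combine (z - z₀) hzne sP sQ _ _ _ _]
lemma csb_relation_all {f g h : ℂ → ℂ}
    (hf : MeromorphicOn f Set.univ) (hg : MeromorphicOn g Set.univ)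
    (hh : MeromorphicOn h Set.univ) (φ : ℂ → ℂ)
    (hφan : ∀ z, AnalyticAt ℂ f z → AnalyticAt ℂ g z → AnalyticAt ℂ h z → AnalyticAt ℂ φ z)
    {w : ℂ} {ρ : ℝ} (hρ : 0 < ρ)
    (hball : ∀ z ∈ Metric.ball w ρ, AnalyticAt ℂ f z ∧ AnalyticAt ℂ g z ∧ AnalyticAt ℂ h z)
    (h0 : ∀ z ∈ Metric.ball w ρ, φ z = 0) :
    ∀ z, AnalyticAt ℂ f z → AnalyticAt ℂ g z → AnalyticAt ℂ h z → φ z = 0 := by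
  set S := {z | AnalyticAt ℂ f z} ∩ ({z | AnalyticAt ℂ g z} ∩ {z | AnalyticAt ℂ h z}) with hSdef
  have hSmem : S ∈ Filter.codiscrete ℂ :=
    Filter.inter_mem (csb_analytic_mem_codiscrete hf)
      (Filter.inter_mem (csb_analytic_mem_codiscrete hg) (csb_analytic_mem_codiscrete hh))
  have hconn : IsPreconnected S := csb_preconnected (csb_countable_compl hSmem)
  have hsan : AnalyticOnNhd ℂ φ S := fun z hz => hφan z hz.1 hz.2.1 hz.2.2
  have hballS : Metric.ball w ρ ⊆ S := fun z hz =>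
    ⟨(hball z hz).1, (hball z hz).2.1, (hball z hz).2.2⟩
  have heq := csb_eqOn_zero hsan hconn hρ hballS h0
  exact fun z h1 h2 h3 => heq ⟨h1, h2, h3⟩
lemma csb_arith (a b c d : ℤ)
    (h12 : a + b - 3 ≤ d) (h23 : b + c - 3 ≤ d) (h13 : a + c - 3 ≤ d)
    (ha : a = 0 ∨ 6 ≤ a ∨ a ≤ -6) (hb : b = 0 ∨ 6 ≤ b ∨ b ≤ -6)
    (hc : c = 0 ∨ 6 ≤ c ∨ c ≤ -6)
    (hneg : a ≤ -6 ∨ b ≤ -6 ∨ c ≤ -6) (hpos : 6 ≤ a ∨ 6 ≤ b ∨ 6 ≤ c) :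
    3 * ((a.toNat : ℤ) + (b.toNat : ℤ) + (c.toNat : ℤ))
      + 3 * (((-d).toNat : ℤ)) - 3 * ((d.toNat : ℤ))
      - 2 * (((-a).toNat : ℤ) + ((-b).toNat : ℤ) + ((-c).toNat : ℤ))
      ≤ 3 * (if 0 < a then (1:ℤ) else 0) + 3 * (if 0 < b then (1:ℤ) else 0)
        + 3 * (if 0 < c then (1:ℤ) else 0) := by
  split_ifs <;> omega

lemma csb_pos_iff (c₀ v : ℤ) (hc : 0 < c₀) : 0 < v ↔ 0 < c₀ * v :=
  ⟨fun hv => mul_pos hc hv, fun hv => by nlinarith⟩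

lemma csb_le_neg6 (c₀ v : ℤ) (h6 : 6 ≤ c₀) (hv : v < 0) : c₀ * v ≤ -6 := by nlinarith

lemma csb_ge6 (c₀ v : ℤ) (h6 : 6 ≤ c₀) (hv : 0 < v) : 6 ≤ c₀ * v := by nlinarith
/-- **Lemma 2.7.** Under the standing hypotheses (meromorphic non-constant `f, g, h`
with `f^n + g^m + h^k = 1`, `min {n,m,k} ≥ 6`, `f^n, g^m, h^k` linearly independent),
let `z₀` be a zero or pole of at least one of `f, g, h` and let `p, q, t` be the
orders of `f, g, h` at `z₀`. If `max {p,q,t} > 0` and `min {p,q,t} < 0`, then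
`A(z₀) ≤ 3·1[p>0] + 3·1[q>0] + 3·1[t>0]`. -/
theorem nevanA_bound_of_max_pos_min_neg
    (f g h : ℂ → ℂ) (n m k : ℤ) (z₀ : ℂ)
    (hf : MeromorphicOn f Set.univ) (hg : MeromorphicOn g Set.univ)
    (hh : MeromorphicOn h Set.univ)
    (hfc : ¬ ∃ c : ℂ, ∀ z : ℂ, AnalyticAt ℂ f z → f z = c)
    (hgc : ¬ ∃ c : ℂ, ∀ z : ℂ, AnalyticAt ℂ g z → g z = c)
    (hhc : ¬ ∃ c : ℂ, ∀ z : ℂ, AnalyticAt ℂ h z → h z = c)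
    (hmin : 6 ≤ min n (min m k))
    (heq : ∀ z : ℂ, AnalyticAt ℂ f z → AnalyticAt ℂ g z → AnalyticAt ℂ h z →
      f z ^ n + g z ^ m + h z ^ k = 1)
    (hind : ∀ a b c : ℂ,
      (∀ z : ℂ, AnalyticAt ℂ f z → AnalyticAt ℂ g z → AnalyticAt ℂ h z →
        a * f z ^ n + b * g z ^ m + c * h z ^ k = 0) →
      a = 0 ∧ b = 0 ∧ c = 0)
    (p q t : ℤ) (hp : p = meroOrd f z₀) (hq : q = meroOrd g z₀) (ht : t = meroOrd h z₀)
    (hzp : p ≠ 0 ∨ q ≠ 0 ∨ t ≠ 0)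
    (hmaxpqt : 0 < max p (max q t)) (hminpqt : min p (min q t) < 0) :
    nevanA (fun z => f z ^ n) (fun z => g z ^ m) (fun z => h z ^ k) z₀ ≤
      3 * (if 0 < p then 1 else 0) + 3 * (if 0 < q then 1 else 0)
        + 3 * (if 0 < t then 1 else 0) := by
  have hn6 : 6 ≤ n := le_trans hmin (min_le_left _ _)
  have hm6 : 6 ≤ m := le_trans hmin ((min_le_right _ _).trans (min_le_left _ _))
  have hk6 : 6 ≤ k := le_trans hmin ((min_le_right _ _).trans (min_le_right _ _))
  set N := n.toNat with hNdef
  set M := m.toNat with hMdef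
  set K := k.toNat with hKdef
  have hNn : (N : ℤ) = n := Int.toNat_of_nonneg (by omega)
  have hMm : (M : ℤ) = m := Int.toNat_of_nonneg (by omega)
  have hKk : (K : ℤ) = k := Int.toNat_of_nonneg (by omega)
  have hN6 : (6 : ℤ) ≤ (N : ℤ) := by omega
  have hM6 : (6 : ℤ) ≤ (M : ℤ) := by omega
  have hK6 : (6 : ℤ) ≤ (K : ℤ) := by omega
  have hfeq : ∀ z : ℂ, f z ^ n = f z ^ N := fun z => by rw [← hNn, zpow_natCast]
  have hgeq : ∀ z : ℂ, g z ^ m = g z ^ M := fun z => by rw [← hMm, zpow_natCast]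
  have hheq : ∀ z : ℂ, h z ^ k = h z ^ K := fun z => by rw [← hKk, zpow_natCast]
  have hFeq : (fun z : ℂ => f z ^ n) = (fun z => f z ^ N) := funext hfeq
  have hGeq : (fun z : ℂ => g z ^ m) = (fun z => g z ^ M) := funext hgeq
  have hHeq : (fun z : ℂ => h z ^ k) = (fun z => h z ^ K) := funext hheq
  rw [hFeq, hGeq, hHeq]
  have hfm := hf z₀ (Set.mem_univ z₀)
  have hgm := hg z₀ (Set.mem_univ z₀)
  have hhm := hh z₀ (Set.mem_univ z₀)
  -- orders of f, g, h at z₀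
  obtain ⟨p₀, hp₀⟩ := WithTop.ne_top_iff_exists.mp (csb_order_ne_top hf hfc z₀)
  obtain ⟨q₀, hq₀⟩ := WithTop.ne_top_iff_exists.mp (csb_order_ne_top hg hgc z₀)
  obtain ⟨t₀, ht₀⟩ := WithTop.ne_top_iff_exists.mp (csb_order_ne_top hh hhc z₀)
  have hp' : p = p₀ := by
    rw [hp, meroOrd, dif_pos hfm, ← hp₀, WithTop.untopD_coe]
  have hq' : q = q₀ := by
    rw [hq, meroOrd, dif_pos hgm, ← hq₀, WithTop.untopD_coe]
  have ht' : t = t₀ := by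
    rw [ht, meroOrd, dif_pos hhm, ← ht₀, WithTop.untopD_coe]
  -- representations of powers
  obtain ⟨G₁, hG₁, hG₁0, hrep₁⟩ := csb_pow_rep N hfm hp₀.symm
  obtain ⟨G₂, hG₂, hG₂0, hrep₂⟩ := csb_pow_rep M hgm hq₀.symm
  obtain ⟨G₃, hG₃, hG₃0, hrep₃⟩ := csb_pow_rep K hhm ht₀.symm
  have hzm₁ : meroOrd (fun z => f z ^ N) z₀ = (N : ℤ) * p₀ := by
    rw [meroOrd, dif_pos (csb_mero_pow N hfm), csb_order_pow N hfm hp₀.symm,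
      WithTop.untopD_coe]
  have hzm₂ : meroOrd (fun z => g z ^ M) z₀ = (M : ℤ) * q₀ := by
    rw [meroOrd, dif_pos (csb_mero_pow M hgm), csb_order_pow M hgm hq₀.symm,
      WithTop.untopD_coe]
  have hzm₃ : meroOrd (fun z => h z ^ K) z₀ = (K : ℤ) * t₀ := by
    rw [meroOrd, dif_pos (csb_mero_pow K hhm), csb_order_pow K hhm ht₀.symm,
      WithTop.untopD_coe]
  -- eventual analyticity and the sum identity
  have hfan := hfm.eventually_analyticAt
  have hgan := hgm.eventually_analyticAt
  have hhan := hhm.eventually_analyticAt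
  have hF₁an : ∀ᶠ z in nhdsWithin z₀ {z₀}ᶜ, AnalyticAt ℂ (fun w => f w ^ N) z :=
    hfan.mono fun z hz => hz.pow N
  have hF₂an : ∀ᶠ z in nhdsWithin z₀ {z₀}ᶜ, AnalyticAt ℂ (fun w => g w ^ M) z :=
    hgan.mono fun z hz => hz.pow M
  have hF₃an : ∀ᶠ z in nhdsWithin z₀ {z₀}ᶜ, AnalyticAt ℂ (fun w => h w ^ K) z :=
    hhan.mono fun z hz => hz.pow K
  have hsum_ev : ∀ᶠ z in nhdsWithin z₀ {z₀}ᶜ,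
      (fun w => f w ^ N) z + (fun w => g w ^ M) z + (fun w => h w ^ K) z = 1 := by
    filter_upwards [hfan, hgan, hhan] with z h1 h2 h3
    have := heq z h1 h2 h3
    rw [hfeq z, hgeq z, hheq z] at this
    exact this
  have hsum_ev' : ∀ᶠ z in nhdsWithin z₀ {z₀}ᶜ,
      (fun w => g w ^ M) z + (fun w => h w ^ K) z + (fun w => f w ^ N) z = 1 :=
    hsum_ev.mono fun z hz => by linear_combination hz
  have hsum_ev'' : ∀ᶠ z in nhdsWithin z₀ {z₀}ᶜ,
      (fun w => h w ^ K) z + (fun w => f w ^ N) z + (fun w => g w ^ M) z = 1 :=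
    hsum_ev.mono fun z hz => by linear_combination hz
  -- three representations of the Wronskian
  obtain ⟨Ga, hGa, hDrepa⟩ := csb_D_rep hG₁ hG₂ hrep₁ hrep₂ hF₁an hF₂an hF₃an hsum_ev
  obtain ⟨Gb, hGb, hDrepb₀⟩ := csb_D_rep hG₂ hG₃ hrep₂ hrep₃ hF₂an hF₃an hF₁an hsum_ev'
  obtain ⟨Gc, hGc, hDrepc₀⟩ := csb_D_rep hG₃ hG₁ hrep₃ hrep₁ hF₃an hF₁an hF₂an hsum_ev''
  have hDrepb : ∀ᶠ z in nhdsWithin z₀ {z₀}ᶜ,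
      wronskian3 (fun w => f w ^ N) (fun w => g w ^ M) (fun w => h w ^ K) z
        = (z - z₀) ^ ((M : ℤ) * q₀ + (K : ℤ) * t₀ - 3) * Gb z :=
    hDrepb₀.mono fun z hz => by rw [csb_cyc]; exact hz
  have hDrepc : ∀ᶠ z in nhdsWithin z₀ {z₀}ᶜ,
      wronskian3 (fun w => f w ^ N) (fun w => g w ^ M) (fun w => h w ^ K) z
        = (z - z₀) ^ ((K : ℤ) * t₀ + (N : ℤ) * p₀ - 3) * Gc z :=
    hDrepc₀.mono fun z hz => by rw [csb_cyc, csb_cyc]; exact hz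
  -- meromorphy of the Wronskian at z₀
  have hDm : MeromorphicAt
      (wronskian3 (fun w => f w ^ N) (fun w => g w ^ M) (fun w => h w ^ K)) z₀ := by
    apply MeromorphicAt.congr
      (f := fun z => (z - z₀) ^ ((N : ℤ) * p₀ + (M : ℤ) * q₀ - 3) * Ga z)
    · exact (((MeromorphicAt.id z₀).sub (MeromorphicAt.const z₀ z₀)).zpow _).mul
        hGa.meromorphicAt
    · exact Filter.EventuallyEq.symm hDrepa
  rcases eq_or_ne (meromorphicOrderAt
      (wronskian3 (fun w => f w ^ N) (fun w => g w ^ M) (fun w => h w ^ K)) z₀) ⊤ with hDtop | hDne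
  · -- impossible : the Wronskian vanishes identically near z₀
    exfalso
    have hDev : ∀ᶠ z in nhdsWithin z₀ {z₀}ᶜ,
        wronskian3 (fun w => f w ^ N) (fun w => g w ^ M) (fun w => h w ^ K) z = 0 :=
      meromorphicOrderAt_eq_top_iff.mp hDtop
    rcases csb_punctured_ball (hDev.and (hfan.and (hgan.and (hhan.and hsum_ev))))
      with ⟨r, hr, hball⟩
    set U := Metric.ball z₀ r ∩ {z₀}ᶜ with hUdef
    have hUopen : IsOpen U := Metric.isOpen_ball.inter isOpen_compl_singleton
    have hU : ∀ z ∈ U, wronskian3 (fun w => f w ^ N) (fun w => g w ^ M)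
          (fun w => h w ^ K) z = 0
        ∧ AnalyticAt ℂ f z ∧ AnalyticAt ℂ g z ∧ AnalyticAt ℂ h z
        ∧ (fun w => f w ^ N) z + (fun w => g w ^ M) z + (fun w => h w ^ K) z = 1 :=
      fun z hz => hball z hz.1 hz.2
    have hF1an : ∀ z ∈ U, AnalyticAt ℂ (fun w => f w ^ N) z :=
      fun z hz => ((hU z hz).2.1).pow N
    have hF2an : ∀ z ∈ U, AnalyticAt ℂ (fun w => g w ^ M) z :=
      fun z hz => ((hU z hz).2.2.1).pow M
    have hF3an : ∀ z ∈ U, AnalyticAt ℂ (fun w => h w ^ K) z :=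
      fun z hz => ((hU z hz).2.2.2.1).pow K
    have hpair := csb_pairD hUopen hF2an hF3an hF1an
      (fun z hz => by linear_combination (hU z hz).2.2.2.2)
    have hrel0 : ∀ z ∈ U, deriv (fun w => g w ^ M) z * deriv (deriv (fun w => h w ^ K)) z
        - deriv (fun w => h w ^ K) z * deriv (deriv (fun w => g w ^ M)) z = 0 := by
      intro z hz
      rw [← hpair z hz, ← csb_cyc]
      exact (hU z hz).1
    -- a ball inside U
    set z₁ : ℂ := z₀ + (r / 2 : ℝ) with hz₁def
    have hdist : dist z₁ z₀ = r / 2 := by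
      simp [hz₁def, dist_eq_norm, Complex.norm_real, abs_of_pos (half_pos hr), abs_of_pos hr]
    have hBU : Metric.ball z₁ (r / 4) ⊆ U := by
      intro w hw
      have hw' : dist w z₁ < r / 4 := Metric.mem_ball.mp hw
      constructor
      · have := dist_triangle w z₁ z₀
        rw [hdist] at this
        exact Metric.mem_ball.mpr (by linarith)
      · intro hcon
        rw [Set.mem_singleton_iff] at hcon
        subst hcon
        rw [dist_comm, hdist] at hw'
        linarith
    have hr4 : 0 < r / 4 := by linarith
    by_cases hca : ∀ w ∈ Metric.ball z₁ (r / 4), deriv (fun x => g x ^ M) w = 0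
    · -- g ^ M is constant on the small ball
      have hconst := csb_const_of_deriv_zero (φ := fun x => g x ^ M) (c := z₁) (ρ := r / 4)
        (fun w hw => by
          have h1 : HasDerivAt (fun x => g x ^ M) (deriv (fun x => g x ^ M) w) w :=
            ((hF2an w (hBU hw)).differentiableAt).hasDerivAt
          rw [hca w hw] at h1
          exact h1)
      set c₂ : ℂ := g z₁ ^ M with hc₂def
      have hrel : ∀ w ∈ Metric.ball z₁ (r / 4),
          (-c₂) * f w ^ N + (1 - c₂) * g w ^ M + (-c₂) * h w ^ K = 0 := fun w hw => by
        have hsumw := (hU w (hBU hw)).2.2.2.2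
        have hcw := hconst w hw
        simp only at hsumw hcw
        linear_combination hcw - c₂ * hsumw
      have hall := csb_relation_all hf hg hh
        (fun w => (-c₂) * f w ^ N + (1 - c₂) * g w ^ M + (-c₂) * h w ^ K)
        (fun z h1 h2 h3 =>
          ((analyticAt_const.mul (h1.pow N)).add (analyticAt_const.mul (h2.pow M))).add
            (analyticAt_const.mul (h3.pow K)))
        hr4
        (fun z hz => ⟨(hU z (hBU hz)).2.1, (hU z (hBU hz)).2.2.1, (hU z (hBU hz)).2.2.2.1⟩)
        hrel
      obtain ⟨e1, e2, e3⟩ := hind (-c₂) (1 - c₂) (-c₂) (fun z h1 h2 h3 => by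
        rw [hfeq z, hgeq z, hheq z]
        exact hall z h1 h2 h3)
      exact one_ne_zero (α := ℂ) (by linear_combination e2 - e1)
    · push_neg at hca
      obtain ⟨z₂, hz₂B, hz₂ne⟩ := hca
      have hF2anU : AnalyticOnNhd ℂ (fun w => g w ^ M) U := hF2an
      have hF3anU : AnalyticOnNhd ℂ (fun w => h w ^ K) U := hF3an
      have hcont : ContinuousAt (deriv (fun x => g x ^ M)) z₂ :=
        (hF2anU.deriv z₂ (hBU hz₂B)).continuousAt
      have hev2 : ∀ᶠ y in nhds z₂, deriv (fun x => g x ^ M) y ≠ 0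
          ∧ y ∈ Metric.ball z₁ (r / 4) :=
        (hcont.eventually_ne hz₂ne).and (Metric.isOpen_ball.eventually_mem hz₂B)
      rcases Metric.eventually_nhds_iff_ball.mp hev2 with ⟨ρ, hρ, hball₂⟩
      have hdiv : ∀ w ∈ Metric.ball z₂ ρ,
          HasDerivAt (fun x => deriv (fun y => h y ^ K) x / deriv (fun y => g y ^ M) x) 0 w := by
        intro w hw
        have hwB : w ∈ Metric.ball z₁ (r / 4) := (hball₂ w hw).2
        have hwu : deriv (fun y => g y ^ M) w ≠ 0 := (hball₂ w hw).1
        have hu' : HasDerivAt (deriv (fun y => g y ^ M))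
            (deriv (deriv (fun y => g y ^ M)) w) w :=
          ((hF2anU.deriv) w (hBU hwB)).differentiableAt.hasDerivAt
        have hv' : HasDerivAt (deriv (fun y => h y ^ K))
            (deriv (deriv (fun y => h y ^ K)) w) w :=
          ((hF3anU.deriv) w (hBU hwB)).differentiableAt.hasDerivAt
        have hq := hv'.div hu' hwu
        refine hq.congr_deriv ?_
        rw [div_eq_zero_iff]
        left
        linear_combination hrel0 w (hBU hwB)
      have hqc := csb_const_of_deriv_zero hdiv
      set α : ℂ := deriv (fun y => h y ^ K) z₂ / deriv (fun y => g y ^ M) z₂ with hαdef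
      have hvu : ∀ w ∈ Metric.ball z₂ ρ,
          deriv (fun y => h y ^ K) w = α * deriv (fun y => g y ^ M) w := by
        intro w hw
        have := hqc w hw
        rw [div_eq_iff (hball₂ w hw).1] at this
        linear_combination this
      have hψ : ∀ w ∈ Metric.ball z₂ ρ,
          HasDerivAt (fun x => h x ^ K - α * g x ^ M) 0 w := by
        intro w hw
        have hwB : w ∈ Metric.ball z₁ (r / 4) := (hball₂ w hw).2
        have h2 : HasDerivAt (fun x => g x ^ M) (deriv (fun x => g x ^ M) w) w :=
          ((hF2an w (hBU hwB)).differentiableAt).hasDerivAt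
        have h3 : HasDerivAt (fun x => h x ^ K) (deriv (fun x => h x ^ K) w) w :=
          ((hF3an w (hBU hwB)).differentiableAt).hasDerivAt
        have hD := h3.sub (h2.const_mul α)
        refine hD.congr_deriv ?_
        rw [hvu w hw]
        ring
      have hconstψ := csb_const_of_deriv_zero hψ
      set β : ℂ := h z₂ ^ K - α * g z₂ ^ M with hβdef
      have hrel : ∀ w ∈ Metric.ball z₂ ρ,
          (-β) * f w ^ N + (-α - β) * g w ^ M + (1 - β) * h w ^ K = 0 := by
        intro w hw
        have hsumw := (hU w (hBU (hball₂ w hw).2)).2.2.2.2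
        have hcw := hconstψ w hw
        simp only at hsumw hcw
        linear_combination hcw - β * hsumw
      have hall := csb_relation_all hf hg hh
        (fun w => (-β) * f w ^ N + (-α - β) * g w ^ M + (1 - β) * h w ^ K)
        (fun z h1 h2 h3 =>
          ((analyticAt_const.mul (h1.pow N)).add (analyticAt_const.mul (h2.pow M))).add
            (analyticAt_const.mul (h3.pow K)))
        hρ
        (fun z hz =>
          ⟨(hU z (hBU (hball₂ z hz).2)).2.1, (hU z (hBU (hball₂ z hz).2)).2.2.1,
            (hU z (hBU (hball₂ z hz).2)).2.2.2.1⟩)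
        hrel
      obtain ⟨e1, e2, e3⟩ := hind (-β) (-α - β) (1 - β) (fun z h1 h2 h3 => by
        rw [hfeq z, hgeq z, hheq z]
        exact hall z h1 h2 h3)
      exact one_ne_zero (α := ℂ) (by linear_combination e3 - e1)
  · obtain ⟨d, hd⟩ := WithTop.ne_top_iff_exists.mp hDne
    have hb12 : (N : ℤ) * p₀ + (M : ℤ) * q₀ - 3 ≤ d := by
      have := csb_orderGe hGa hDrepa hDm
      rw [← hd] at this
      exact_mod_cast this
    have hb23 : (M : ℤ) * q₀ + (K : ℤ) * t₀ - 3 ≤ d := by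
      have := csb_orderGe hGb hDrepb hDm
      rw [← hd] at this
      exact_mod_cast this
    have hb13 : (N : ℤ) * p₀ + (K : ℤ) * t₀ - 3 ≤ d := by
      have := csb_orderGe hGc hDrepc hDm
      rw [← hd] at this
      have h' : (K : ℤ) * t₀ + (N : ℤ) * p₀ - 3 ≤ d := by exact_mod_cast this
      omega
    have hmeroD : meroOrd
        (wronskian3 (fun w => f w ^ N) (fun w => g w ^ M) (fun w => h w ^ K)) z₀ = d := by
      rw [meroOrd, dif_pos hDm, ← hd, WithTop.untopD_coe]
    have ind₁ : (if 0 < p then (1:ℤ) else 0) = (if 0 < (N : ℤ) * p₀ then (1:ℤ) else 0) := by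
      rw [hp']
      exact if_congr (csb_pos_iff (N : ℤ) p₀ (by omega)) rfl rfl
    have ind₂ : (if 0 < q then (1:ℤ) else 0) = (if 0 < (M : ℤ) * q₀ then (1:ℤ) else 0) := by
      rw [hq']
      exact if_congr (csb_pos_iff (M : ℤ) q₀ (by omega)) rfl rfl
    have ind₃ : (if 0 < t then (1:ℤ) else 0) = (if 0 < (K : ℤ) * t₀ then (1:ℤ) else 0) := by
      rw [ht']
      exact if_congr (csb_pos_iff (K : ℤ) t₀ (by omega)) rfl rfl
    have htri : ∀ (c₀ v : ℤ), 6 ≤ c₀ → (c₀ * v = 0 ∨ 6 ≤ c₀ * v ∨ c₀ * v ≤ -6) := by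
      intro c₀ v hc₀
      rcases lt_trichotomy v 0 with hv | hv | hv
      · right; right; nlinarith
      · left; rw [hv, mul_zero]
      · right; left; nlinarith
    have hd3 : p₀ < 0 ∨ q₀ < 0 ∨ t₀ < 0 := by
      rw [hp', hq', ht'] at hminpqt
      omega
    have hd4 : 0 < p₀ ∨ 0 < q₀ ∨ 0 < t₀ := by
      rw [hp', hq', ht'] at hmaxpqt
      omega
    have hneg : (N : ℤ) * p₀ ≤ -6 ∨ (M : ℤ) * q₀ ≤ -6 ∨ (K : ℤ) * t₀ ≤ -6 := by
      rcases hd3 with h' | h' | h'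
      · exact Or.inl (csb_le_neg6 _ _ hN6 h')
      · exact Or.inr (Or.inl (csb_le_neg6 _ _ hM6 h'))
      · exact Or.inr (Or.inr (csb_le_neg6 _ _ hK6 h'))
    have hpos : 6 ≤ (N : ℤ) * p₀ ∨ 6 ≤ (M : ℤ) * q₀ ∨ 6 ≤ (K : ℤ) * t₀ := by
      rcases hd4 with h' | h' | h'
      · exact Or.inl (csb_ge6 _ _ hN6 h')
      · exact Or.inr (Or.inl (csb_ge6 _ _ hM6 h'))
      · exact Or.inr (Or.inr (csb_ge6 _ _ hK6 h'))
    rw [ind₁, ind₂, ind₃]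
    simp only [nevanA, zeroMult, poleMult, hzm₁, hzm₂, hzm₃, hmeroD]
    have := csb_arith ((N : ℤ) * p₀) ((M : ℤ) * q₀) ((K : ℤ) * t₀) d hb12 hb23 hb13
      (htri _ _ hN6) (htri _ _ hM6) (htri _ _ hK6) hneg hpos
    linarith
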